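/- For the two-qubit dephasing channel with Kraus operators Aₖ obtained as the complementary channel of Λ (where A₁,…,A₄ are the four 4×4 matrices with k-th column pattern (1/2)(±1,±1,±1,±1)ᵀ given by the Hadamard sign pattern, placed in column k), the conjugated complementary channel (Λ^♯)'(ρ) = Σᵢ Bᵢ ρ Bᵢ† with Bᵢ = U Aᵢ U† and U = CNOT₁₂·CNOT₂₁·(K†⊗I₂) satisfies (Λ^♯)'((1/2)I₂ ⊗ σ_B) = (1/4)I₄ for every density matrix σ_B; i.e., the complementary channel is also private on the same subsystem. -/

import Mathlib

open Matrix Kronecker ComplexOrder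

noncomputable section

def Kgate : Matrix (Fin 2) (Fin 2) ℂ :=
  ((Real.sqrt 2 : ℂ))⁻¹ • !![1, 1; Complex.I, -Complex.I]

def CNOT12 : Matrix (Fin 2 × Fin 2) (Fin 2 × Fin 2) ℂ :=
  fun p q => if p.1 = q.1 ∧ p.2 = q.1 + q.2 then 1 else 0

def CNOT21 : Matrix (Fin 2 × Fin 2) (Fin 2 × Fin 2) ℂ :=
  fun p q => if p.2 = q.2 ∧ p.1 = q.2 + q.1 then 1 else 0

def Urot : Matrix (Fin 2 × Fin 2) (Fin 2 × Fin 2) ℂ :=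
  CNOT12 * CNOT21 * (Kgateᴴ ⊗ₖ (1 : Matrix (Fin 2) (Fin 2) ℂ))

/-- Hadamard sign matrix. -/
def Had : Matrix (Fin 2) (Fin 2) ℂ := !![1, 1; 1, -1]

/-- Kraus operators of the complementary channel Λ^♯: the k-th operator has
nonzero entries only in column k, equal to (1/2)·(k-th Hadamard sign column). -/
def Acomp (k : Fin 2 × Fin 2) : Matrix (Fin 2 × Fin 2) (Fin 2 × Fin 2) ℂ :=
  (1/2 : ℂ) • vecMulVec (fun p => (Had ⊗ₖ Had) p k) (fun q => if q = k then 1 else 0)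

def Bcomp (k : Fin 2 × Fin 2) : Matrix (Fin 2 × Fin 2) (Fin 2 × Fin 2) ℂ :=
  Urot * Acomp k * Urotᴴ

def cc : ℂ := ((Real.sqrt 2 : ℂ))⁻¹

open Fin.NatCast

def Vm : Matrix (Fin 2 × Fin 2) (Fin 2 × Fin 2) ℂ := fun p q =>
  !![(1:ℂ), 0, -Complex.I, 0;
     0, 1, 0, Complex.I;
     0, 1, 0, -Complex.I;
     1, 0, Complex.I, 0] (p.1 * 2 + p.2) (q.1 * 2 + q.2)

lemma hU : Urot = cc • Vm := by
  ext ⟨i, j⟩ ⟨k, l⟩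
  fin_cases i <;> fin_cases j <;> fin_cases k <;> fin_cases l <;>
    simp [Urot, CNOT12, CNOT21, Kgate, Vm, cc, Matrix.mul_apply, Fintype.sum_prod_type,
      Fin.sum_univ_two, Matrix.one_apply, Complex.ext_iff]

lemma hcc : cc * cc = 1/2 := by
  rw [cc, ← mul_inv]
  norm_num [← Complex.ofReal_mul, Real.mul_self_sqrt]

lemma key (k : Fin 2 × Fin 2) : Bcomp k = (1/2 : ℂ) • (Vm * Acomp k * Vmᴴ) := by
  have hsc : star cc = cc := by simp [cc, Complex.conj_ofReal]
  rw [Bcomp, hU, Matrix.conjTranspose_smul, hsc, Matrix.smul_mul, Matrix.mul_smul,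
    Matrix.smul_mul, smul_smul, hcc]

open Complex in
def BM (k : Fin 2 × Fin 2) : Matrix (Fin 2 × Fin 2) (Fin 2 × Fin 2) ℂ := fun p q =>
  (1/4 : ℂ) *
  ![!![1-I,0,0,1-I; 1+I,0,0,1+I; 1-I,0,0,1-I; 1+I,0,0,1+I],
    !![0,1-I,1-I,0; 0,-1-I,-1-I,0; 0,-1+I,-1+I,0; 0,1+I,1+I,0],
    !![-1+I,0,0,1-I; 1+I,0,0,-1-I; -1+I,0,0,1-I; 1+I,0,0,-1-I],
    !![0,1-I,-1+I,0; 0,1+I,-1-I,0; 0,-1+I,1-I,0; 0,-1-I,1+I,0]]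
   (k.1 * 2 + k.2) (p.1 * 2 + p.2) (q.1 * 2 + q.2)

set_option maxHeartbeats 1000000 in
lemma hB00 : Bcomp (0,0) = BM (0,0) := by
  rw [key]
  ext ⟨i, j⟩ ⟨a, b⟩
  fin_cases i <;> fin_cases j <;> fin_cases a <;> fin_cases b <;>
    (simp [Acomp, Vm, BM, Had, Matrix.mul_apply, Fintype.sum_prod_type, Fin.sum_univ_two,
      Matrix.vecMulVec_apply, Matrix.conjTranspose_apply, Prod.ext_iff,
      Complex.ext_iff] <;> norm_num [Matrix.vecHead, Matrix.vecTail])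

set_option maxHeartbeats 1000000 in
lemma hB01 : Bcomp (0,1) = BM (0,1) := by
  rw [key]
  ext ⟨i, j⟩ ⟨a, b⟩
  fin_cases i <;> fin_cases j <;> fin_cases a <;> fin_cases b <;>
    (simp [Acomp, Vm, BM, Had, Matrix.mul_apply, Fintype.sum_prod_type, Fin.sum_univ_two,
      Matrix.vecMulVec_apply, Matrix.conjTranspose_apply, Prod.ext_iff,
      Complex.ext_iff] <;> norm_num [Matrix.vecHead, Matrix.vecTail])

set_option maxHeartbeats 1000000 in
lemma hB10 : Bcomp (1,0) = BM (1,0) := by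
  rw [key]
  ext ⟨i, j⟩ ⟨a, b⟩
  fin_cases i <;> fin_cases j <;> fin_cases a <;> fin_cases b <;>
    (simp [Acomp, Vm, BM, Had, Matrix.mul_apply, Fintype.sum_prod_type, Fin.sum_univ_two,
      Matrix.vecMulVec_apply, Matrix.conjTranspose_apply, Prod.ext_iff,
      Complex.ext_iff] <;> norm_num [Matrix.vecHead, Matrix.vecTail])

set_option maxHeartbeats 1000000 in
lemma hB11 : Bcomp (1,1) = BM (1,1) := by
  rw [key]
  ext ⟨i, j⟩ ⟨a, b⟩
  fin_cases i <;> fin_cases j <;> fin_cases a <;> fin_cases b <;>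
    (simp [Acomp, Vm, BM, Had, Matrix.mul_apply, Fintype.sum_prod_type, Fin.sum_univ_two,
      Matrix.vecMulVec_apply, Matrix.conjTranspose_apply, Prod.ext_iff, Fin.ext_iff,
      Complex.ext_iff] <;> norm_num [Matrix.vecHead, Matrix.vecTail])

lemma hB (k : Fin 2 × Fin 2) : Bcomp k = BM k := by
  fin_cases k
  · exact hB00
  · exact hB01
  · exact hB10
  · exact hB11

set_option maxHeartbeats 2000000 in
/-- The conjugated complementary channel (Λ^♯)' of the two-qubit dephasing
channel is also private on the same subsystem:
(Λ^♯)'((1/2)I ⊗ σ_B) = (1/4)I for every density matrix σ_B. -/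
theorem complementary_channel_also_private
    (σB : Matrix (Fin 2) (Fin 2) ℂ) (hσB : σB.PosSemidef) (htr : σB.trace = 1) :
    ∑ k : Fin 2 × Fin 2,
      Bcomp k * (((1/2 : ℂ) • (1 : Matrix (Fin 2) (Fin 2) ℂ)) ⊗ₖ σB) * (Bcomp k)ᴴ
    = (1/4 : ℂ) • (1 : Matrix (Fin 2 × Fin 2) (Fin 2 × Fin 2) ℂ) := by
  have h : σB 0 0 + σB 1 1 = 1 := by
    simpa [Matrix.trace, Fin.sum_univ_two] using htr
  simp only [hB]
  ext ⟨i, j⟩ ⟨k, l⟩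
  fin_cases i <;> fin_cases j <;> fin_cases k <;> fin_cases l <;>
    (simp [BM, Matrix.sum_apply, Matrix.mul_apply, Fintype.sum_prod_type, Fin.sum_univ_two,
      Matrix.conjTranspose_apply, Matrix.kroneckerMap_apply, Matrix.one_apply,
      Matrix.smul_apply, Fin.ext_iff, Prod.ext_iff, Complex.star_def, map_sub, map_add,
      Complex.conj_I, Matrix.vecHead, Matrix.vecTail];
     try ring_nf;
     try simp only [Complex.I_sq];
     try ring_nf;
     try first
       | linear_combination (1/4 : ℂ) * h
       | linear_combination (-(1/4) : ℂ) * h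
       | linear_combination (Complex.I/4) * h
       | linear_combination (-Complex.I/4) * h
       | linear_combination (0 : ℂ) * h)
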